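/- Let F be a countable field, let W be a finite-dimensional vector space over F, let T be an action of the additive group of W on a probability space (X,ℬ,μ) by invertible measure-preserving transformations, and let f ∈ L²(X,ℬ,μ) be such that the orbit {f ∘ T^w : w ∈ W} is precompact in the L² norm topology. Then for any polynomial mapping φ : F^n → W and any ε > 0, there exists r ∈ ℕ such that the set {u ∈ F^n : ‖f ∘ T^{φ(u)} − f‖_{L²} < ε} is IP*_r in the additive group F^n. -/

import Mathlib

open MeasureTheory Filter Set
open scoped ENNReal

/-- Finite sums set `FS(x₁,…,x_r)`. -/
def FSfin {G : Type*} [AddCommMonoid G] {r : ℕ} (x : Fin r → G) : Set G :=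
  {g | ∃ α : Finset (Fin r), α.Nonempty ∧ ∑ i ∈ α, x i = g}

/-- `A` is an IP_r set: it contains `FS(x₁,…,x_r)` for some `x₁,…,x_r`. -/
def IsIPr {G : Type*} [AddCommMonoid G] (r : ℕ) (A : Set G) : Prop :=
  ∃ x : Fin r → G, FSfin x ⊆ A

/-- `A` is an IP*_r set: it meets every IP_r set. -/
def IsIPrStar {G : Type*} [AddCommMonoid G] (r : ℕ) (A : Set G) : Prop :=
  ∀ B : Set G, IsIPr r B → (A ∩ B).Nonempty

/-- A monomial mapping `R^n → R`: `u ↦ a · u₁^{d₁} ⋯ u_n^{d_n}` with the `dᵢ` not all zero. -/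
def IsMonomialMap {R : Type*} [CommRing R] {n : ℕ} (ψ : (Fin n → R) → R) : Prop :=
  ∃ (a : R) (d : Fin n → ℕ), (∃ i, d i ≠ 0) ∧ ∀ u, ψ u = a * ∏ i, (u i) ^ (d i)

/-- A polynomial mapping `F^n → W`: a finite sum `u ↦ ∑ ψᵢ(u) • wᵢ` with `ψᵢ` monomial mappings. -/
def IsPolynomialMap {F : Type*} [Field F] {W : Type*} [AddCommGroup W] [Module F W]
    {n : ℕ} (φ : (Fin n → F) → W) : Prop :=
  ∃ (k : ℕ) (ψ : Fin k → ((Fin n → F) → F)) (w : Fin k → W),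
    (∀ i, IsMonomialMap (ψ i)) ∧ ∀ u, φ u = ∑ i, ψ i u • w i


section Aux

section FUcomb

open Hindman

lemma FS_drop_subset {M : Type*} [AddSemigroup M] :
    ∀ (d : ℕ) (a : Stream' M), FS (a.drop d) ⊆ FS a := by
  intro d
  induction d with
  | zero => intro a; rw [Stream'.drop_zero]
  | succ d ih =>
    intro a x hx
    have h1 : a.drop (d + 1) = (a.drop d).tail := by
      rw [Stream'.tail_eq_drop, Stream'.drop_drop, Nat.add_comm]
    exact ih a (FS.tail _ _ (h1 ▸ hx))

lemma sum_mem_FS : ∀ (s : Finset ℕ), s.Nonempty → ∀ (b : Stream' ℕ) (k : ℕ),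
    (∀ i ∈ s, k ≤ i) → (∑ i ∈ s, b i) ∈ FS (b.drop k) := by
  intro s
  induction s using Finset.strongInduction with
  | _ s ih =>
    intro hne b k hk
    have hamem : s.min' hne ∈ s := Finset.min'_mem _ _
    set a := s.min' hne with ha
    have hka : k ≤ a := hk a hamem
    have hdsub : FS (b.drop a) ⊆ FS (b.drop k) := by
      have h2 : (b.drop k).drop (a - k) = b.drop a := by
        rw [Stream'.drop_drop, Nat.add_sub_of_le hka]
      rw [← h2]; exact FS_drop_subset _ _
    have hhead : (b.drop a).head = b a := Stream'.head_drop b a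
    rw [← Finset.add_sum_erase s (fun i => b i) hamem]
    rcases Finset.eq_empty_or_nonempty (s.erase a) with he | hne'
    · rw [he, Finset.sum_empty (f := fun i => b i), add_zero]
      apply hdsub
      rw [← hhead]
      exact FS.head' _
    · have htail : (∑ i ∈ s.erase a, b i) ∈ FS ((b.drop a).tail) := by
        have h3 : (b.drop a).tail = b.drop (a + 1) := by
          rw [Stream'.tail_eq_drop, Stream'.drop_drop, Nat.add_comm]
        rw [h3]
        refine ih _ (Finset.erase_ssubset hamem) hne' b (a + 1) ?_
        intro i hi
        rcases Finset.mem_erase.mp hi with ⟨hne2, hmem2⟩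
        have := s.min'_le i hmem2
        rw [← ha] at this
        omega
      apply hdsub
      rw [← hhead]
      exact FS.cons' _ _ htail

lemma FS_pos : ∀ (b : Stream' ℕ) (x : ℕ), x ∈ FS b → (∀ i : ℕ, 0 < b i) → 0 < x := by
  intro b x hx
  induction hx with
  | head' a => exact fun h => h 0
  | tail' a m _ ih => exact fun h => ih fun i => h (i + 1)
  | cons' a m _ ih => exact fun h => Nat.add_pos_left (h 0) _

lemma exists_block_dvd (b : Stream' ℕ) (s₀ q : ℕ) (hq : 0 < q) :
    ∃ Γ : Finset ℕ, Γ.Nonempty ∧ (∀ i ∈ Γ, s₀ ≤ i) ∧ q ∣ ∑ i ∈ Γ, b i := by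
  classical
  set P : ℕ → ℕ := fun j => ∑ i ∈ Finset.Ico s₀ (s₀ + j), b i with hP
  obtain ⟨j₁, j₂, hne, heq⟩ := Fintype.exists_ne_map_eq_of_card_lt
    (fun j : Fin (q + 1) => (⟨P j % q, Nat.mod_lt _ hq⟩ : Fin q)) (by simp)
  obtain ⟨k₁, k₂, hk, hkeq⟩ : ∃ k₁ k₂ : ℕ, k₁ < k₂ ∧ P k₁ % q = P k₂ % q := by
    have hv : (j₁ : ℕ) ≠ (j₂ : ℕ) := fun h => hne (Fin.ext h)
    have hvals : P j₁ % q = P j₂ % q := congrArg Fin.val heq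
    rcases lt_or_gt_of_ne hv with h | h
    · exact ⟨j₁, j₂, h, hvals⟩
    · exact ⟨j₂, j₁, h, hvals.symm⟩
  refine ⟨Finset.Ico (s₀ + k₁) (s₀ + k₂), ?_, ?_, ?_⟩
  · rw [Finset.nonempty_Ico]; omega
  · intro i hi; rw [Finset.mem_Ico] at hi; omega
  · have hsplit : P k₁ + ∑ i ∈ Finset.Ico (s₀ + k₁) (s₀ + k₂), b i = P k₂ :=
      Finset.sum_Ico_consecutive _ (by omega) (by omega)
    have hle : P k₁ ≤ P k₂ := by omega
    have hdvd : q ∣ P k₂ - P k₁ := (Nat.modEq_iff_dvd' hle).mp hkeq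
    have h4 : ∑ i ∈ Finset.Ico (s₀ + k₁) (s₀ + k₂), b i = P k₂ - P k₁ := by omega
    rwa [h4]


lemma exists_sep_blocks : ∀ (N : ℕ) (b : Stream' ℕ), (∀ i : ℕ, 0 < b i) → ∀ (s₀ h₀ : ℕ),
    ∃ (Γ B : Fin N → Finset ℕ),
      (∀ t, (Γ t).Nonempty) ∧ (∀ t, ∀ i ∈ Γ t, s₀ ≤ i) ∧
      (∀ t t' : Fin N, t < t' → ∀ i ∈ Γ t, ∀ j ∈ Γ t', i < j) ∧
      (∀ t, (B t).Nonempty) ∧ (∀ t, ∀ i ∈ B t, h₀ ≤ i) ∧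
      (∀ t t' : Fin N, t < t' → ∀ i ∈ B t, ∀ j ∈ B t', i < j) ∧
      (∀ t, ∑ i ∈ B t, 2 ^ i = ∑ i ∈ Γ t, b i) := by
  intro N
  induction N with
  | zero =>
    intro b hb s₀ h₀
    exact ⟨Fin.elim0, Fin.elim0, fun t => t.elim0, fun t => t.elim0, fun t => t.elim0,
      fun t => t.elim0, fun t => t.elim0, fun t => t.elim0, fun t => t.elim0⟩
  | succ N ih =>
    intro b hb s₀ h₀
    obtain ⟨Γ₀, hΓ₀ne, hΓ₀lb, hΓ₀dvd⟩ := exists_block_dvd b s₀ (2 ^ h₀) (Nat.pow_pos (by norm_num))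
    set m₀ := ∑ i ∈ Γ₀, b i with hm₀
    have hm₀pos : 0 < m₀ := Finset.sum_pos (fun i _ => hb i) hΓ₀ne
    set B₀ := m₀.bitIndices.toFinset with hB₀
    have hB₀sum : ∑ i ∈ B₀, 2 ^ i = m₀ := Finset.twoPowSum_toFinset_bitIndices m₀
    have hB₀ne : B₀.Nonempty := by
      rcases Finset.eq_empty_or_nonempty B₀ with h | h
      · exfalso; rw [h, Finset.sum_empty] at hB₀sum; omega
      · exact h
    have hB₀lb : ∀ i ∈ B₀, h₀ ≤ i := by
      obtain ⟨q, hq⟩ := hΓ₀dvd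
      intro i hi
      rw [hB₀, List.mem_toFinset] at hi
      rw [hq, Nat.bitIndices_two_pow_mul] at hi
      obtain ⟨j, _, rfl⟩ := List.mem_map.mp hi
      omega
    set h₁ := h₀ + m₀ + 1 with hh₁
    have hB₀ub : ∀ i ∈ B₀, i < h₁ := by
      intro i hi
      rw [hB₀, List.mem_toFinset] at hi
      have h2 := Nat.two_pow_le_of_mem_bitIndices hi
      have h3 : m₀ < 2 ^ h₁ :=
        lt_of_lt_of_le (Nat.lt_two_pow_self (n := m₀)) (Nat.pow_le_pow_right (by norm_num) (by omega))
      have h4 : (2 : ℕ) ^ i < 2 ^ h₁ := lt_of_le_of_lt h2 h3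
      exact (Nat.pow_lt_pow_iff_right (by norm_num)).mp h4
    obtain ⟨s₁, hs₁⟩ : ∃ s₁, ∀ i ∈ Γ₀, i < s₁ :=
      ⟨Γ₀.max' hΓ₀ne + 1, fun i hi => Nat.lt_succ_of_le (Finset.le_max' _ _ hi)⟩
    obtain ⟨Γ', B', h1, h2, h3, h4, h5, h6, h7⟩ := ih b hb s₁ h₁
    refine ⟨Fin.cons Γ₀ Γ', Fin.cons B₀ B', ?_, ?_, ?_, ?_, ?_, ?_, ?_⟩
    · intro t
      refine Fin.cases ?_ ?_ t
      · simpa using hΓ₀ne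
      · intro u; simpa using h1 u
    · intro t
      refine Fin.cases ?_ ?_ t
      · simpa using hΓ₀lb
      · intro u
        simp only [Fin.cons_succ]
        intro i hi
        have hs₀s₁ : s₀ ≤ s₁ := by
          obtain ⟨i₀, hi₀⟩ := hΓ₀ne
          have := hΓ₀lb i₀ hi₀
          have := hs₁ i₀ hi₀
          omega
        exact le_trans hs₀s₁ (h2 u i hi)
    · intro t t' hlt i hi j hj
      rcases Fin.eq_zero_or_eq_succ t' with rfl | ⟨u', rfl⟩
      · exact absurd hlt (Fin.not_lt_zero t)
      · rcases Fin.eq_zero_or_eq_succ t with rfl | ⟨u, rfl⟩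
        · rw [Fin.cons_zero] at hi
          rw [Fin.cons_succ] at hj
          exact lt_of_lt_of_le (hs₁ i hi) (h2 u' j hj)
        · rw [Fin.cons_succ] at hi hj
          exact h3 u u' (Fin.succ_lt_succ_iff.mp hlt) i hi j hj
    · intro t
      refine Fin.cases ?_ ?_ t
      · simpa using hB₀ne
      · intro u; simpa using h4 u
    · intro t
      refine Fin.cases ?_ ?_ t
      · simpa using hB₀lb
      · intro u
        simp only [Fin.cons_succ]
        intro i hi
        have : h₀ ≤ h₁ := by omega
        exact le_trans this (h5 u i hi)
    · intro t t' hlt i hi j hj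
      rcases Fin.eq_zero_or_eq_succ t' with rfl | ⟨u', rfl⟩
      · exact absurd hlt (Fin.not_lt_zero t)
      · rcases Fin.eq_zero_or_eq_succ t with rfl | ⟨u, rfl⟩
        · rw [Fin.cons_zero] at hi
          rw [Fin.cons_succ] at hj
          exact lt_of_lt_of_le (hB₀ub i hi) (h5 u' j hj)
        · rw [Fin.cons_succ] at hi hj
          exact h6 u u' (Fin.succ_lt_succ_iff.mp hlt) i hi j hj
    · intro t
      refine Fin.cases ?_ ?_ t
      · simpa using hB₀sum
      · intro u; simpa using h7 u


lemma FU_infinite {M : ℕ} (c : Finset ℕ → Fin M) (N : ℕ) :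
    ∃ B : Fin N → Finset ℕ, (∀ t, (B t).Nonempty) ∧
      (∀ t t', t ≠ t' → Disjoint (B t) (B t')) ∧
      (∀ I J : Finset (Fin N), I.Nonempty → J.Nonempty →
        c (I.biUnion B) = c (J.biUnion B)) := by
  classical
  set a : Stream' ℕ := fun i => 2 ^ i with ha
  have hcov : FS a ⊆ ⋃₀ (Set.range fun j : Fin M =>
      {n : ℕ | n ∈ FS a ∧ c n.bitIndices.toFinset = j}) := by
    intro n hn
    exact ⟨_, ⟨c n.bitIndices.toFinset, rfl⟩, hn, rfl⟩
  obtain ⟨cl, hclmem, b, hb⟩ := Hindman.FS_partition_regular a _ (Set.finite_range _) hcov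
  obtain ⟨j, rfl⟩ := hclmem
  have hapos : ∀ i : ℕ, 0 < a i := fun i => Nat.pow_pos (by norm_num)
  have hbpos : ∀ i : ℕ, 0 < b i := by
    intro i
    have h1 : (b.drop i).head ∈ FS (b.drop i) := FS.head _
    have h2 := FS_drop_subset i b h1
    rw [Stream'.head_drop] at h2
    exact FS_pos a _ (hb h2).1 hapos
  obtain ⟨Γ, B, hΓne, _, hΓmono, hBne, _, hBmono, hBsum⟩ := exists_sep_blocks N b hbpos 0 0
  have hBdisj : ∀ t t', t ≠ t' → Disjoint (B t) (B t') := by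
    intro t t' htt'
    rw [Finset.disjoint_left]
    intro i hi hi'
    rcases lt_or_gt_of_ne htt' with h | h
    · exact absurd (hBmono t t' h i hi i hi') (lt_irrefl i)
    · exact absurd (hBmono t' t h i hi' i hi) (lt_irrefl i)
  have hΓdisj : ∀ t t', t ≠ t' → Disjoint (Γ t) (Γ t') := by
    intro t t' htt'
    rw [Finset.disjoint_left]
    intro i hi hi'
    rcases lt_or_gt_of_ne htt' with h | h
    · exact absurd (hΓmono t t' h i hi i hi') (lt_irrefl i)
    · exact absurd (hΓmono t' t h i hi' i hi) (lt_irrefl i)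
  refine ⟨B, hBne, hBdisj, ?_⟩
  suffices H : ∀ I : Finset (Fin N), I.Nonempty → c (I.biUnion B) = j by
    intro I J hI hJ; rw [H I hI, H J hJ]
  intro I hI
  have hkey : ∑ i ∈ I.biUnion B, 2 ^ i = ∑ i ∈ I.biUnion Γ, b i := by
    rw [Finset.sum_biUnion (fun t _ t' _ htt' => hBdisj t t' htt'),
      Finset.sum_biUnion (f := fun i => b i) (fun t _ t' _ htt' => hΓdisj t t' htt')]
    exact Finset.sum_congr rfl fun t _ => hBsum t
  have hUne : (I.biUnion Γ).Nonempty := by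
    obtain ⟨t, ht⟩ := hI
    obtain ⟨i, hi⟩ := hΓne t
    exact ⟨i, Finset.mem_biUnion.mpr ⟨t, ht, hi⟩⟩
  have hmem : (∑ i ∈ I.biUnion Γ, b i) ∈ FS b := by
    have h5 := sum_mem_FS (I.biUnion Γ) hUne b 0 (fun i _ => Nat.zero_le i)
    rwa [Stream'.drop_zero] at h5
  have hcol := (hb hmem).2
  rw [← hkey, Finset.toFinset_bitIndices_twoPowSum] at hcol
  exact hcol

def GoodFU (M N r : ℕ) (c : Finset ℕ → Fin M) (B : Fin N → Finset ℕ) : Prop :=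
  (∀ t, (B t).Nonempty) ∧ (∀ t, ∀ i ∈ B t, i < r) ∧
  (∀ t t', t ≠ t' → Disjoint (B t) (B t')) ∧
  (∀ I J : Finset (Fin N), I.Nonempty → J.Nonempty → c (I.biUnion B) = c (J.biUnion B))

lemma FU_finite (M N : ℕ) : ∃ r : ℕ, ∀ c : Finset ℕ → Fin M,
    ∃ B : Fin N → Finset ℕ, GoodFU M N r c B := by
  classical
  by_contra hcon
  have hstep : ∀ r : ℕ, ∃ c : Finset ℕ → Fin M, ∀ B, ¬ GoodFU M N r c B := by
    intro r
    obtain ⟨c, hc⟩ := Classical.not_forall.mp (fun h => hcon ⟨r, h⟩)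
    exact ⟨c, fun B hB => hc ⟨B, hB⟩⟩
  choose C hC using hstep
  have hex : ∀ s : Finset ℕ, ∃ j : Fin M, {r | C r s = j} ∈ (Filter.hyperfilter ℕ : Ultrafilter ℕ) := by
    intro s
    by_contra hno
    push_neg at hno
    have h1 : ∀ j : Fin M, {r | C r s = j}ᶜ ∈ (Filter.hyperfilter ℕ : Ultrafilter ℕ) :=
      fun j => Ultrafilter.compl_mem_iff_notMem.mpr (hno j)
    have h2 : (⋂ j : Fin M, {r | C r s = j}ᶜ) ∈ (Filter.hyperfilter ℕ : Ultrafilter ℕ) := by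
      rw [← Ultrafilter.mem_coe]
      exact Filter.iInter_mem.mpr fun j => Ultrafilter.mem_coe.mpr (h1 j)
    obtain ⟨r, hr⟩ := Ultrafilter.nonempty_of_mem h2
    exact (Set.mem_iInter.mp hr (C r s)) rfl
  choose climit hclimit using hex
  obtain ⟨B, hBne, hBdisj, hBcol⟩ := FU_infinite climit N
  obtain ⟨r₀, hr₀⟩ : ∃ r₀, ∀ t, ∀ i ∈ B t, i < r₀ := by
    refine ⟨(Finset.univ.biUnion B).sup id + 1, fun t i hi => ?_⟩
    have h3 : i ∈ Finset.univ.biUnion B := Finset.mem_biUnion.mpr ⟨t, Finset.mem_univ t, hi⟩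
    exact Nat.lt_succ_of_le (Finset.le_sup (f := id) h3)
  have hbig : ({r | r₀ ≤ r} ∩
      ⋂ I : Finset (Fin N), {r | C r (I.biUnion B) = climit (I.biUnion B)}) ∈
      (Filter.hyperfilter ℕ : Ultrafilter ℕ) := by
    rw [← Ultrafilter.mem_coe]
    refine Filter.inter_mem ?_ (Filter.iInter_mem.mpr fun I => Ultrafilter.mem_coe.mpr (hclimit _))
    refine Ultrafilter.mem_coe.mpr (Filter.mem_hyperfilter_of_finite_compl ?_)
    have : {r : ℕ | r₀ ≤ r}ᶜ = {r : ℕ | r < r₀} := by ext r; simp [not_le]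
    rw [this]
    exact Set.finite_lt_nat r₀
  obtain ⟨r', hr'⟩ := Ultrafilter.nonempty_of_mem hbig
  obtain ⟨hr'1, hr'2⟩ := hr'
  refine hC r' B ⟨hBne, fun t i hi => lt_of_lt_of_le (hr₀ t i hi) hr'1, hBdisj, ?_⟩
  intro I J hI hJ
  have hI' : C r' (I.biUnion B) = climit (I.biUnion B) := Set.mem_iInter.mp hr'2 I
  have hJ' : C r' (J.biUnion B) = climit (J.biUnion B) := Set.mem_iInter.mp hr'2 J
  rw [hI', hJ', hBcol I J hI hJ]

end FUcomb

section AltSum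

lemma sum_neg_one_pow_powerset_filter {R : Type*} [CommRing R] {β : Type*} [DecidableEq β]
    (s R₀ : Finset β) (hsub : R₀ ⊆ s) (hne : R₀ ≠ s) :
    ∑ J ∈ s.powerset.filter (fun J => R₀ ⊆ J), (-1 : R) ^ J.card = 0 := by
  classical
  have hbij : ∑ J ∈ s.powerset.filter (fun J => R₀ ⊆ J), (-1 : R) ^ J.card
      = ∑ K ∈ (s \ R₀).powerset, (-1 : R) ^ (R₀.card + K.card) := by
    refine Finset.sum_nbij' (fun J => J \ R₀) (fun K => R₀ ∪ K) ?_ ?_ ?_ ?_ ?_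
    · intro J hJ
      rw [Finset.mem_filter, Finset.mem_powerset] at hJ
      exact Finset.mem_powerset.mpr (Finset.sdiff_subset_sdiff hJ.1 (le_refl R₀))
    · intro K hK
      rw [Finset.mem_powerset] at hK
      refine Finset.mem_filter.mpr ⟨Finset.mem_powerset.mpr ?_, Finset.subset_union_left⟩
      exact Finset.union_subset hsub (hK.trans (Finset.sdiff_subset))
    · intro J hJ
      rw [Finset.mem_filter] at hJ
      exact Finset.union_sdiff_of_subset hJ.2
    · intro K hK
      rw [Finset.mem_powerset] at hK
      exact Finset.union_sdiff_cancel_left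
        ((Finset.disjoint_sdiff (s := R₀) (t := s)).mono_right hK)
    · intro J hJ
      rw [Finset.mem_filter] at hJ
      congr 1
      rw [← Finset.card_sdiff_add_card_eq_card hJ.2]
      ring
  rw [hbij]
  have hexp : ∑ K ∈ (s \ R₀).powerset, (-1 : R) ^ (R₀.card + K.card)
      = (-1 : R) ^ R₀.card * ∑ K ∈ (s \ R₀).powerset, (-1 : R) ^ K.card := by
    rw [Finset.mul_sum]
    exact Finset.sum_congr rfl fun K _ => by rw [pow_add]
  rw [hexp]
  have hcast : ∑ K ∈ (s \ R₀).powerset, (-1 : R) ^ K.card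
      = ((∑ K ∈ (s \ R₀).powerset, (-1 : ℤ) ^ K.card : ℤ) : R) := by
    push_cast
    rfl
  rw [hcast, Finset.sum_powerset_neg_one_pow_card, if_neg, Int.cast_zero, mul_zero]
  intro h
  have : s ⊆ R₀ := by
    intro x hx
    by_contra hx'
    have : x ∈ s \ R₀ := Finset.mem_sdiff.mpr ⟨hx, hx'⟩
    rw [h] at this
    exact absurd this (Finset.notMem_empty x)
  exact hne (Finset.Subset.antisymm hsub this)

lemma alt_sum_monomial {R : Type*} [CommRing R] {n N : ℕ} (d : Fin n → ℕ)
    (hd : ∑ j, d j < N) (y : Fin N → Fin n → R) :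
    ∑ J ∈ (Finset.univ : Finset (Fin N)).powerset,
      (-1 : R) ^ J.card * ∏ j, (∑ t ∈ J, y t j) ^ d j = 0 := by
  classical
  have h1 : ∀ J : Finset (Fin N), ∏ j, (∑ t ∈ J, y t j) ^ d j
      = ∑ g ∈ Fintype.piFinset (fun _ : (Σ j : Fin n, Fin (d j)) => J),
          ∏ p : (Σ j : Fin n, Fin (d j)), y (g p) p.1 := by
    intro J
    have e1 : ∏ p : (Σ j : Fin n, Fin (d j)), (∑ t ∈ J, y t p.1)
        = ∏ j, (∑ t ∈ J, y t j) ^ d j := by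
      rw [← Finset.univ_sigma_univ, Finset.prod_sigma]
      refine Finset.prod_congr rfl fun j _ => ?_
      show (∏ _s : Fin (d j), (∑ t ∈ J, y t j)) = _
      rw [Finset.prod_const, Finset.card_univ, Fintype.card_fin]
    rw [← e1, Finset.prod_univ_sum]
  have h2 : ∀ J : Finset (Fin N),
      Fintype.piFinset (fun _ : (Σ j : Fin n, Fin (d j)) => J)
      = Finset.univ.filter (fun g : (Σ j : Fin n, Fin (d j)) → Fin N => ∀ p, g p ∈ J) := by
    intro J
    ext g
    simp [Fintype.mem_piFinset]
  have h3 : ∑ J ∈ (Finset.univ : Finset (Fin N)).powerset,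
      (-1 : R) ^ J.card * ∏ j, (∑ t ∈ J, y t j) ^ d j
      = ∑ g : (Σ j : Fin n, Fin (d j)) → Fin N, ∑ J ∈ (Finset.univ : Finset (Fin N)).powerset,
          (if ∀ p, g p ∈ J then (-1 : R) ^ J.card * ∏ p : (Σ j : Fin n, Fin (d j)), y (g p) p.1
            else 0) := by
    rw [← Finset.sum_comm]
    refine Finset.sum_congr rfl fun J _ => ?_
    rw [h1 J, h2 J, Finset.sum_filter, Finset.mul_sum]
    exact Finset.sum_congr rfl fun g _ => by rw [mul_ite, mul_zero]
  rw [h3]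
  refine Finset.sum_eq_zero fun g _ => ?_
  have hcond : ∀ J : Finset (Fin N), (∀ p, g p ∈ J) ↔ Finset.image g Finset.univ ⊆ J := by
    intro J
    rw [Finset.image_subset_iff]
    simp
  have hne : Finset.image g Finset.univ ≠ Finset.univ := by
    intro h
    have hcle := Finset.card_image_le (f := g) (s := Finset.univ)
    rw [h, Finset.card_univ, Finset.card_univ, Fintype.card_fin, Fintype.card_sigma] at hcle
    simp only [Fintype.card_fin] at hcle
    omega
  calc ∑ J ∈ (Finset.univ : Finset (Fin N)).powerset,
      (if ∀ p, g p ∈ J then (-1 : R) ^ J.card * ∏ p : (Σ j : Fin n, Fin (d j)), y (g p) p.1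
        else 0)
      = ∑ J ∈ ((Finset.univ : Finset (Fin N)).powerset).filter
          (fun J => Finset.image g Finset.univ ⊆ J),
          (-1 : R) ^ J.card * ∏ p : (Σ j : Fin n, Fin (d j)), y (g p) p.1 := by
        rw [Finset.sum_filter]
        exact Finset.sum_congr rfl fun J _ => if_congr (hcond J) rfl rfl
    _ = (∑ J ∈ ((Finset.univ : Finset (Fin N)).powerset).filter
          (fun J => Finset.image g Finset.univ ⊆ J), (-1 : R) ^ J.card)
          * ∏ p : (Σ j : Fin n, Fin (d j)), y (g p) p.1 := by
        rw [Finset.sum_mul]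
    _ = 0 := by
        rw [sum_neg_one_pow_powerset_filter Finset.univ (Finset.image g Finset.univ)
          (Finset.subset_univ _) hne, zero_mul]

lemma alt_sum_poly {Fq : Type*} [CommRing Fq] {Wv : Type*} [AddCommGroup Wv] [Module Fq Wv]
    {n N k : ℕ} (a : Fin k → Fq) (d : Fin k → Fin n → ℕ) (w : Fin k → Wv)
    (hd : ∀ i, ∑ j, d i j < N) (y : Fin N → Fin n → Fq) :
    ∑ J ∈ (Finset.univ : Finset (Fin N)).powerset,
      (-1 : Fq) ^ J.card • (∑ i, (a i * ∏ j, (∑ t ∈ J, y t j) ^ d i j) • w i) = 0 := by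
  have h1 : ∀ J : Finset (Fin N),
      (-1 : Fq) ^ J.card • (∑ i, (a i * ∏ j, (∑ t ∈ J, y t j) ^ d i j) • w i)
      = ∑ i, ((-1 : Fq) ^ J.card * (a i * ∏ j, (∑ t ∈ J, y t j) ^ d i j)) • w i := by
    intro J
    rw [Finset.smul_sum]
    exact Finset.sum_congr rfl fun i _ => smul_smul _ _ _
  simp_rw [h1]
  rw [Finset.sum_comm]
  refine Finset.sum_eq_zero fun i _ => ?_
  rw [← Finset.sum_smul]
  have h2 : ∑ J ∈ (Finset.univ : Finset (Fin N)).powerset,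
      (-1 : Fq) ^ J.card * (a i * ∏ j, (∑ t ∈ J, y t j) ^ d i j)
      = a i * ∑ J ∈ (Finset.univ : Finset (Fin N)).powerset,
          (-1 : Fq) ^ J.card * ∏ j, (∑ t ∈ J, y t j) ^ d i j := by
    rw [Finset.mul_sum]
    exact Finset.sum_congr rfl fun J _ => by ring
  rw [h2, alt_sum_monomial (d i) (hd i) y, mul_zero, zero_smul]

end AltSum


end Aux

/-- If `f ∈ L²(X,ℬ,μ)` has norm-precompact orbit (equivalently, totally bounded orbit)
under an action `T` of the additive group of a finite-dimensional vector space `W` over a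
countable field `F`, then for any polynomial mapping `φ : F^n → W` and any `ε > 0` the set
`{u : ‖f ∘ T^{φ(u)} − f‖_{L²} < ε}` is IP*_r for some `r`. -/
theorem compact_function_polynomial_returns_iprstar
    {F : Type*} [Field F] [Countable F]
    {W : Type*} [AddCommGroup W] [Module F W] [FiniteDimensional F W]
    {X : Type*} [MeasurableSpace X] (μ : Measure X) [IsProbabilityMeasure μ]
    (T : W → X → X) (hT0 : T 0 = id)
    (hTadd : ∀ v w : W, T (v + w) = T v ∘ T w)
    (hTmp : ∀ w : W, MeasurePreserving (T w) μ μ)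
    (f : X → ℝ) (hf : MemLp f 2 μ)
    (horbit : ∀ δ : ℝ, 0 < δ → ∃ (m : ℕ) (w : Fin m → W), ∀ v : W, ∃ i : Fin m,
      (eLpNorm (fun x => f (T v x) - f (T (w i) x)) 2 μ).toReal < δ)
    {n : ℕ} (φ : (Fin n → F) → W) (hφ : IsPolynomialMap φ)
    (ε : ℝ) (hε : 0 < ε) :
    ∃ r : ℕ, IsIPrStar r
      {u : Fin n → F | (eLpNorm (fun x => f (T (φ u) x) - f x) 2 μ).toReal < ε} := by
  classical
  obtain ⟨k, ψ, wv, hmono, hphi⟩ := hφ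
  choose a d hdne hψ using hmono
  set N : ℕ := (Finset.univ.sup fun i : Fin k => ∑ j, d i j) + 1 with hN
  have hNpos : 0 < N := Nat.succ_pos _
  have hdN : ∀ i, ∑ j, d i j < N := fun i =>
    Nat.lt_succ_of_le (Finset.le_sup (f := fun i : Fin k => ∑ j, d i j) (Finset.mem_univ i))
  haveI : Nonempty (Fin N) := ⟨⟨0, hNpos⟩⟩
  -- φ 0 = 0
  have hφ0 : φ 0 = 0 := by
    rw [hphi]
    refine Finset.sum_eq_zero fun i _ => ?_
    rw [hψ i]
    obtain ⟨j₀, hj₀⟩ := hdne i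
    have hz : ∏ j, (0 : Fin n → F) j ^ d i j = 0 :=
      Finset.prod_eq_zero (Finset.mem_univ j₀) (by simp [zero_pow hj₀])
    rw [hz, mul_zero, zero_smul]
  -- vanishing identity for φ
  have hvanish : ∀ y : Fin N → (Fin n → F),
      ∑ J ∈ (Finset.univ : Finset (Fin N)).powerset,
        (-1 : F) ^ J.card • φ (∑ t ∈ J, y t) = 0 := by
    intro y
    have hφJ : ∀ J : Finset (Fin N),
        φ (∑ t ∈ J, y t) = ∑ i, (a i * ∏ j, (∑ t ∈ J, y t j) ^ d i j) • wv i := by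
      intro J
      rw [hphi]
      refine Finset.sum_congr rfl fun i _ => ?_
      rw [hψ i]
      congr 2
      refine Finset.prod_congr rfl fun j _ => ?_
      rw [Finset.sum_apply]
    calc ∑ J ∈ (Finset.univ : Finset (Fin N)).powerset,
        (-1 : F) ^ J.card • φ (∑ t ∈ J, y t)
        = ∑ J ∈ (Finset.univ : Finset (Fin N)).powerset,
          (-1 : F) ^ J.card • (∑ i, (a i * ∏ j, (∑ t ∈ J, y t j) ^ d i j) • wv i) :=
          Finset.sum_congr rfl fun J _ => by rw [hφJ J]
      _ = 0 := alt_sum_poly a d wv hdN y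
  -- analysis: the invariant pseudometric
  set dd : W → W → ℝ := fun v w => (eLpNorm (fun x => f (T v x) - f (T w x)) 2 μ).toReal
    with hdd
  have hgm : ∀ v : W, MemLp (fun x => f (T v x)) 2 μ :=
    fun v => hf.comp_measurePreserving (hTmp v)
  have hsubm : ∀ v w : W, MemLp (fun x => f (T v x) - f (T w x)) 2 μ :=
    fun v w => (hgm v).sub (hgm w)
  have hfin : ∀ v w : W, eLpNorm (fun x => f (T v x) - f (T w x)) 2 μ ≠ ⊤ :=
    fun v w => (hsubm v w).eLpNorm_ne_top
  have hinv : ∀ v w u : W, dd (v + u) (w + u) = dd v w := by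
    intro v w u
    have hcomp : (fun x => f (T (v + u) x) - f (T (w + u) x))
        = (fun x => f (T v x) - f (T w x)) ∘ (T u) := by
      funext x
      simp only [Function.comp_apply]
      rw [hTadd v u, hTadd w u]
      simp
    simp only [hdd]
    rw [hcomp, eLpNorm_comp_measurePreserving (hsubm v w).aestronglyMeasurable (hTmp u)]
  have hsymm : ∀ v w, dd v w = dd w v := by
    intro v w
    simp only [hdd]
    have hng : (fun x => f (T w x) - f (T v x)) = -(fun x => f (T v x) - f (T w x)) := by
      funext x; simp
    rw [hng, eLpNorm_neg]
  have htri : ∀ v u w, dd v w ≤ dd v u + dd u w := by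
    intro v u w
    have hadd : (fun x => f (T v x) - f (T w x))
        = (fun x => f (T v x) - f (T u x)) + (fun x => f (T u x) - f (T w x)) := by
      funext x; simp
    have hle := eLpNorm_add_le (hsubm v u).aestronglyMeasurable
      (hsubm u w).aestronglyMeasurable (by norm_num : (1 : ℝ≥0∞) ≤ 2)
    rw [← hadd] at hle
    exact ENNReal.toReal_le_add hle (hfin v u) (hfin u w)
  have hdd00 : dd 0 0 = 0 := by
    simp only [hdd]
    have h0 : (fun x => f (T 0 x) - f (T 0 x)) = (0 : X → ℝ) := by funext x; simp
    rw [h0, eLpNorm_zero, ENNReal.toReal_zero]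
  have hsubadd : ∀ v w : W, dd (v + w) 0 ≤ dd v 0 + dd w 0 := by
    intro v w
    have h1 : dd (v + w) w = dd v 0 := by
      have h2 := hinv v 0 w
      rwa [zero_add] at h2
    calc dd (v + w) 0 ≤ dd (v + w) w + dd w 0 := htri _ _ _
      _ = dd v 0 + dd w 0 := by rw [h1]
  have hneg : ∀ v : W, dd (-v) 0 = dd v 0 := by
    intro v
    have h2 := hinv (-v) 0 v
    rw [neg_add_cancel, zero_add] at h2
    rw [← h2, hsymm]
  have hsumB : ∀ (s : Finset (Finset (Fin N))) (h : Finset (Fin N) → W),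
      dd (∑ J ∈ s, h J) 0 ≤ ∑ J ∈ s, dd (h J) 0 := by
    intro s h
    induction s using Finset.cons_induction with
    | empty => simpa using le_of_eq hdd00
    | cons a s ha ih =>
      rw [Finset.sum_cons, Finset.sum_cons]
      exact le_trans (hsubadd _ _) (add_le_add_right ih _)
  -- choose the net
  set δ : ℝ := ε / 2 ^ (N + 2) with hδ
  have hδpos : 0 < δ := by positivity
  obtain ⟨m, wnet, hnet⟩ := horbit δ hδpos
  set cnet : W → Fin m := fun v => (hnet v).choose with hcnet
  have hcnet_spec : ∀ v, dd v (wnet (cnet v)) < δ := fun v => (hnet v).choose_spec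
  have hcnet_close : ∀ v v', cnet v = cnet v' → dd v v' < 2 * δ := by
    intro v v' hvv
    have h1 := hcnet_spec v
    have h2 := hcnet_spec v'
    rw [hvv] at h1
    have h3 : dd (wnet (cnet v')) v' = dd v' (wnet (cnet v')) := hsymm _ _
    calc dd v v' ≤ dd v (wnet (cnet v')) + dd (wnet (cnet v')) v' := htri _ _ _
      _ < δ + δ := by rw [h3]; exact add_lt_add h1 h2
      _ = 2 * δ := by ring
  -- combinatorial input
  obtain ⟨r, hr⟩ := FU_finite m N
  refine ⟨r, ?_⟩
  intro Bset hBset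
  obtain ⟨xs, hxs⟩ := hBset
  set xe : ℕ → (Fin n → F) := fun i => if h : i < r then xs ⟨i, h⟩ else 0 with hxe
  set gg : Finset ℕ → (Fin n → F) := fun s => ∑ i ∈ s, xe i with hgg
  obtain ⟨B, hBne, hBlt, hBdisj, hBcol⟩ := hr (fun s => cnet (φ (gg s)))
  set y : Fin N → (Fin n → F) := fun t => gg (B t) with hy
  have hsum_biUnion : ∀ J : Finset (Fin N), (∑ t ∈ J, y t) = gg (J.biUnion B) := by
    intro J
    simp only [hy, hgg]
    exact (Finset.sum_biUnion (fun t _ t' _ htt' => hBdisj t t' htt')).symm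
  set S : Finset (Fin N) → W := fun J => φ (gg (J.biUnion B)) with hS
  have hid : ∑ J ∈ (Finset.univ : Finset (Fin N)).powerset, (-1 : F) ^ J.card • S J = 0 := by
    calc ∑ J ∈ (Finset.univ : Finset (Fin N)).powerset, (-1 : F) ^ J.card • S J
        = ∑ J ∈ (Finset.univ : Finset (Fin N)).powerset,
            (-1 : F) ^ J.card • φ (∑ t ∈ J, y t) :=
          Finset.sum_congr rfl fun J _ => by rw [hS, hsum_biUnion J]
      _ = 0 := hvanish y
  have hcols : ∀ J : Finset (Fin N), J.Nonempty → cnet (S J) = cnet (S Finset.univ) :=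
    fun J hJ => hBcol J Finset.univ hJ ⟨⟨0, hNpos⟩, Finset.mem_univ _⟩
  have hE : ∀ J : Finset (Fin N), J.Nonempty → dd (S J - S Finset.univ) 0 < 2 * δ := by
    intro J hJ
    have h1 : dd (S J - S Finset.univ) 0 = dd (S J) (S Finset.univ) := by
      have h2 := hinv (S J - S Finset.univ) 0 (S Finset.univ)
      rw [sub_add_cancel, zero_add] at h2
      exact h2.symm
    rw [h1]
    exact hcnet_close _ _ (hcols J hJ)
  -- representation of S univ
  have hκ : ∑ J ∈ (Finset.univ : Finset (Fin N)).powerset, (-1 : F) ^ J.card = 0 := by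
    have hint : ∑ J ∈ (Finset.univ : Finset (Fin N)).powerset, (-1 : ℤ) ^ J.card = 0 := by
      rw [Finset.sum_powerset_neg_one_pow_card, if_neg]
      exact Finset.univ_nonempty.ne_empty
    have hcast : ∑ J ∈ (Finset.univ : Finset (Fin N)).powerset, (-1 : F) ^ J.card
        = ((∑ J ∈ (Finset.univ : Finset (Fin N)).powerset, (-1 : ℤ) ^ J.card : ℤ) : F) := by
      push_cast
      rfl
    rw [hcast, hint, Int.cast_zero]
  have hSempty : S ∅ = 0 := by
    have h1 : (∅ : Finset (Fin N)).biUnion B = ∅ := Finset.biUnion_empty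
    have hgg0 : gg (∅ : Finset ℕ) = 0 := by simp only [hgg]; exact Finset.sum_empty
    show φ (gg ((∅ : Finset (Fin N)).biUnion B)) = 0
    rw [h1, hgg0, hφ0]
  have hSrep : S Finset.univ = ∑ J ∈ ((Finset.univ : Finset (Fin N)).powerset).erase ∅,
      (-1 : F) ^ J.card • (S J - S Finset.univ) := by
    have hsum0 : ∑ J ∈ (Finset.univ : Finset (Fin N)).powerset,
        (-1 : F) ^ J.card • (S J - S Finset.univ) = 0 := by
      have hexpand : ∑ J ∈ (Finset.univ : Finset (Fin N)).powerset,
          (-1 : F) ^ J.card • (S J - S Finset.univ)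
          = (∑ J ∈ (Finset.univ : Finset (Fin N)).powerset, (-1 : F) ^ J.card • S J)
            - (∑ J ∈ (Finset.univ : Finset (Fin N)).powerset, (-1 : F) ^ J.card) • S Finset.univ := by
        simp_rw [smul_sub]
        rw [Finset.sum_sub_distrib, ← Finset.sum_smul]
      rw [hexpand, hid, hκ, zero_smul, sub_zero]
    have hemptymem : (∅ : Finset (Fin N)) ∈ (Finset.univ : Finset (Fin N)).powerset :=
      Finset.mem_powerset.mpr (Finset.empty_subset _)
    rw [← Finset.add_sum_erase _ _ hemptymem] at hsum0
    simp only [Finset.card_empty, pow_zero, one_smul, hSempty, zero_sub] at hsum0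
    rwa [neg_add_eq_zero] at hsum0
  -- final bound
  have hcard : (((Finset.univ : Finset (Fin N)).powerset).erase ∅).card ≤ 2 ^ N := by
    calc (((Finset.univ : Finset (Fin N)).powerset).erase ∅).card
        ≤ ((Finset.univ : Finset (Fin N)).powerset).card :=
          Finset.card_le_card (Finset.erase_subset _ _)
      _ = 2 ^ N := by rw [Finset.card_powerset, Finset.card_univ, Fintype.card_fin]
  have hbound : dd (S Finset.univ) 0 < ε := by
    calc dd (S Finset.univ) 0
        = dd (∑ J ∈ ((Finset.univ : Finset (Fin N)).powerset).erase ∅,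
            (-1 : F) ^ J.card • (S J - S Finset.univ)) 0 := by rw [← hSrep]
      _ ≤ ∑ J ∈ ((Finset.univ : Finset (Fin N)).powerset).erase ∅,
            dd ((-1 : F) ^ J.card • (S J - S Finset.univ)) 0 := hsumB _ _
      _ ≤ ∑ _J ∈ ((Finset.univ : Finset (Fin N)).powerset).erase ∅, 2 * δ := by
          refine Finset.sum_le_sum fun J hJ => ?_
          have hJne : J.Nonempty :=
            Finset.nonempty_iff_ne_empty.mpr (Finset.mem_erase.mp hJ).1
          rcases neg_one_pow_eq_or F J.card with h | h
          · rw [h, one_smul]; exact (hE J hJne).le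
          · rw [h, neg_one_smul, hneg]; exact (hE J hJne).le
      _ = ((((Finset.univ : Finset (Fin N)).powerset).erase ∅).card : ℝ) * (2 * δ) := by
          rw [Finset.sum_const, nsmul_eq_mul]
      _ ≤ (2 ^ N : ℝ) * (2 * δ) := by
          have h2δ : 0 ≤ 2 * δ := by positivity
          have : ((((Finset.univ : Finset (Fin N)).powerset).erase ∅).card : ℝ) ≤ (2 ^ N : ℝ) := by
            exact_mod_cast hcard
          exact mul_le_mul_of_nonneg_right this h2δ
      _ < ε := by
          rw [hδ]
          have h2 : (2 : ℝ) ^ (N + 2) = 2 ^ N * 4 := by rw [pow_add]; norm_num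
          have h3 : (2 : ℝ) ^ N * (2 * (ε / 2 ^ (N + 2))) = ε / 2 := by
            rw [h2]
            field_simp
            ring
          rw [h3]
          linarith
  -- produce the witness
  set U : Finset ℕ := Finset.univ.biUnion B with hU
  have hUlt : ∀ i ∈ U, i < r := by
    intro i hi
    obtain ⟨t, _, hit⟩ := Finset.mem_biUnion.mp hi
    exact hBlt t i hit
  set α : Finset (Fin r) := Finset.univ.filter (fun i : Fin r => (i : ℕ) ∈ U) with hα
  have hαne : α.Nonempty := by
    obtain ⟨i0, hi0⟩ := hBne ⟨0, hNpos⟩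
    have hiU : i0 ∈ U := Finset.mem_biUnion.mpr ⟨_, Finset.mem_univ _, hi0⟩
    exact ⟨⟨i0, hUlt _ hiU⟩, Finset.mem_filter.mpr ⟨Finset.mem_univ _, hiU⟩⟩
  have hαsum : ∑ i ∈ α, xs i = gg U := by
    simp only [hgg]
    refine Finset.sum_bij' (fun (i : Fin r) (_ : i ∈ α) => (i : ℕ))
      (fun i hi => (⟨i, hUlt i hi⟩ : Fin r)) ?_ ?_ ?_ ?_ ?_
    · intro i hi
      exact (Finset.mem_filter.mp hi).2
    · intro i hi
      exact Finset.mem_filter.mpr ⟨Finset.mem_univ _, hi⟩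
    · intro i hi
      rfl
    · intro i hi
      rfl
    · intro i hi
      simp only [hxe]
      rw [dif_pos i.isLt]
  have hfinal : dd (φ (gg U)) 0 < ε := by
    have : φ (gg U) = S Finset.univ := by rw [hS, hU]
    rw [this]
    exact hbound
  refine ⟨gg U, ?_, hxs ⟨α, hαne, hαsum⟩⟩
  show (eLpNorm (fun x => f (T (φ (gg U)) x) - f x) 2 μ).toReal < ε
  have hrw : (fun x => f (T (φ (gg U)) x) - f x)
      = (fun x => f (T (φ (gg U)) x) - f (T 0 x)) := by
    funext x
    rw [hT0]
    rfl
  rw [hrw]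
  exact hfinal
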